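/- arXiv:1309.1943 — 3 statements merged into one kernel-verified Lean document; each statement's English description precedes it below -/
import Mathlib

section
/- For all real α ≥ 2 and x ∈ [0,1], one has 1 - x^α ≤ (1+x)^{α-1} (1-x). -/
theorem one_sub_rpow_le (α x : ℝ) (hα : 2 ≤ α) (hx : x ∈ Set.Icc (0:ℝ) 1) :
    1 - x ^ α ≤ (1 + x) ^ (α - 1) * (1 - x) := by
  obtain ⟨hx0, hx1⟩ := hx
  rcases eq_or_lt_of_le hx0 with h0 | h0
  · subst h0
    rw [Real.zero_rpow (by linarith : α ≠ 0)]
    norm_num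
  rcases eq_or_lt_of_le hx1 with h1 | h1
  · subst h1
    simp
  -- now 0 < x < 1
  set l := Real.log (1 + x) with hl
  set m := Real.log x with hm
  have h1x : (0:ℝ) < 1 + x := by linarith
  have hlpos : 0 < l := Real.log_pos (by linarith)
  have hmneg : m < 0 := Real.log_neg h0 h1
  have hexl : Real.exp l = 1 + x := Real.exp_log h1x
  have hexm : Real.exp m = x := Real.exp_log h0
  set g : ℝ → ℝ := fun a => (1 - x) * Real.exp ((a - 1) * l) + Real.exp (a * m) with hg
  have hderiv : ∀ a : ℝ, HasDerivAt g
      ((1 - x) * (Real.exp ((a - 1) * l) * l) + Real.exp (a * m) * m) a := by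
    intro a
    have h1 : HasDerivAt (fun a : ℝ => (a - 1) * l) l a := by
      simpa using ((hasDerivAt_id a).sub_const 1).mul_const l
    have h2 : HasDerivAt (fun a : ℝ => Real.exp ((a - 1) * l))
        (Real.exp ((a - 1) * l) * l) a := (Real.hasDerivAt_exp _).comp a h1
    have h3 : HasDerivAt (fun a : ℝ => a * m) m a := by
      simpa using (hasDerivAt_id a).mul_const m
    have h4 : HasDerivAt (fun a : ℝ => Real.exp (a * m)) (Real.exp (a * m) * m) a :=
      (Real.hasDerivAt_exp _).comp a h3
    exact (h2.const_mul (1 - x)).add h4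
  -- derivative nonneg on [2,∞)
  have hdnn : ∀ a : ℝ, 2 ≤ a →
      0 ≤ (1 - x) * (Real.exp ((a - 1) * l) * l) + Real.exp (a * m) * m := by
    intro a ha
    have e1 : Real.exp l ≤ Real.exp ((a - 1) * l) := by
      apply Real.exp_le_exp.mpr
      nlinarith [hlpos]
    have e2 : Real.exp (a * m) ≤ Real.exp (2 * m) := by
      apply Real.exp_le_exp.mpr
      nlinarith [hmneg]
    have e2' : Real.exp (2 * m) = x ^ 2 := by
      rw [two_mul, Real.exp_add, hexm]; ring
    -- log(1+x) ≥ x/(1+x) i.e. (1+x) * l ≥ x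
    have hll : x / (1 + x) ≤ l := by
      have := Real.add_one_le_exp (-l)
      rw [Real.exp_neg, hexl] at this
      rw [div_le_iff₀ h1x]
      nlinarith [mul_le_mul_of_nonneg_right this h1x.le, mul_inv_cancel₀ (ne_of_gt h1x)]
    have hmm : (x - 1) / x ≤ m := by
      have := Real.add_one_le_exp (-m)
      rw [Real.exp_neg, hexm] at this
      rw [div_le_iff₀ h0]
      nlinarith [mul_le_mul_of_nonneg_right this h0.le, mul_inv_cancel₀ (ne_of_gt h0)]
    have key : 0 ≤ (1 - x^2) * l + x^2 * m := by
      have k1 : x * (1 - x) ≤ (1 - x^2) * l := by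
        have : x / (1 + x) * (1 - x^2) ≤ l * (1 - x^2) := by
          apply mul_le_mul_of_nonneg_right hll; nlinarith
        calc x * (1 - x) = x / (1 + x) * (1 - x^2) := by
              field_simp; ring
          _ ≤ l * (1 - x^2) := this
          _ = (1 - x^2) * l := by ring
      have k2 : -(x * (1 - x)) ≤ x^2 * m := by
        have : (x - 1) / x * x^2 ≤ m * x^2 := by
          apply mul_le_mul_of_nonneg_right hmm; positivity
        calc -(x * (1 - x)) = (x - 1) / x * x^2 := by
              field_simp; ring
          _ ≤ m * x^2 := this
          _ = x^2 * m := by ring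
      linarith
    have b1 : (1 - x^2) * l ≤ (1 - x) * (Real.exp ((a - 1) * l) * l) := by
      have : (1 - x) * (Real.exp l * l) ≤ (1 - x) * (Real.exp ((a - 1) * l) * l) := by
        apply mul_le_mul_of_nonneg_left _ (by linarith)
        apply mul_le_mul_of_nonneg_right e1 hlpos.le
      calc (1 - x^2) * l = (1 - x) * (Real.exp l * l) := by rw [hexl]; ring
        _ ≤ _ := this
    have b2 : x^2 * m ≤ Real.exp (a * m) * m := by
      rw [← e2']
      exact mul_le_mul_of_nonpos_right e2 hmneg.le
    linarith
  have hmono : MonotoneOn g (Set.Ici 2) := by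
    apply monotoneOn_of_deriv_nonneg (convex_Ici 2)
    · exact fun a _ => ((hderiv a).continuousAt).continuousWithinAt
    · intro a _
      exact (hderiv a).differentiableAt.differentiableWithinAt
    · intro a ha
      rw [interior_Ici] at ha
      rw [(hderiv a).deriv]
      exact hdnn a (le_of_lt ha)
  have hg2 : g 2 = 1 := by
    simp only [hg]
    norm_num [hexl, hexm, two_mul, Real.exp_add]
    nlinarith [hexl, hexm]
  have hgα : 1 ≤ g α := by
    rw [← hg2]
    exact hmono (by norm_num) hα hα
  have hrw1 : (1 + x) ^ (α - 1) = Real.exp ((α - 1) * l) := by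
    rw [Real.rpow_def_of_pos h1x, ← hl]; ring_nf
  have hrw2 : x ^ α = Real.exp (α * m) := by
    rw [Real.rpow_def_of_pos h0, ← hm]; ring_nf
  simp only [hg] at hgα
  rw [hrw1, hrw2]
  linarith
end

section
/- For α > 1 and x > 0, one has x^{1-1/α} ∫₁^∞ (u-1)^{1/α} / (u(u+x)) du ≤ π / sin(π/α). -/
open Real MeasureTheory


lemma beta_cval {s : ℝ} (h0 : 0 < s) (h1 : s < 1) :
    Complex.betaIntegral s (1 - (s:ℂ)) = ↑π / Complex.sin (π * s) := by
  have h := Complex.Gamma_mul_Gamma_eq_betaIntegral (s := (s:ℂ)) (t := 1 - (s:ℂ))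
    (by simpa using h0) (by simp [sub_pos.2 h1])
  rw [Complex.Gamma_mul_Gamma_one_sub] at h
  have : (s:ℂ) + (1 - s) = 1 := by ring
  rw [this, Complex.Gamma_one, one_mul] at h
  exact h.symm

lemma beta_rval {s : ℝ} (h0 : 0 < s) (h1 : s < 1) :
    ∫ y in Set.Ioo (0:ℝ) 1, y ^ (s-1) * (1-y) ^ (-s) = π / Real.sin (π * s) := by
  have key : ∫ y in (0:ℝ)..1, ((y:ℂ) ^ ((s:ℂ)-1) * (1-(y:ℂ)) ^ (1-(s:ℂ)-1))
      = ((∫ y in Set.Ioo (0:ℝ) 1, y ^ (s-1) * (1-y) ^ (-s) : ℝ) : ℂ) := by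
    rw [intervalIntegral.integral_of_le zero_le_one, integral_Ioc_eq_integral_Ioo]
    rw [setIntegral_congr_fun measurableSet_Ioo (g := fun y : ℝ =>
        ((y ^ (s-1) * (1-y) ^ (-s) : ℝ) : ℂ)) (fun y hy => by
      obtain ⟨hy0, hy1⟩ := hy
      push_cast
      rw [Complex.ofReal_cpow hy0.le, Complex.ofReal_cpow (by linarith : (0:ℝ) ≤ 1 - y)]
      push_cast
      ring_nf)]
    exact integral_ofReal
  have hB := beta_cval h0 h1
  rw [Complex.betaIntegral, key] at hB
  have : ((π / Real.sin (π * s) : ℝ) : ℂ) = ↑π / Complex.sin (π * s) := by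
    push_cast [Complex.ofReal_sin]
    norm_num
  rw [← this] at hB
  exact_mod_cast hB

lemma beta_int {s : ℝ} (h0 : 0 < s) (h1 : s < 1) :
    IntegrableOn (fun y => y ^ (s-1) * (1-y) ^ (-s)) (Set.Ioo (0:ℝ) 1) := by
  have hC := (Complex.betaIntegral_convergent (u := (s:ℂ)) (v := 1 - (s:ℂ))
    (by simpa using h0) (by simp [sub_pos.2 h1])).1
  have hC' : IntegrableOn (fun y : ℝ => (y:ℂ) ^ ((s:ℂ)-1) * (1-(y:ℂ)) ^ (1-(s:ℂ)-1))
      (Set.Ioo (0:ℝ) 1) := hC.mono_set Set.Ioo_subset_Ioc_self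
  have := hC'.re
  refine this.congr ?_
  refine (ae_restrict_iff' measurableSet_Ioo).2 (Filter.Eventually.of_forall fun y hy => ?_)
  obtain ⟨hy0, hy1⟩ := hy
  have : ((y:ℂ) ^ ((s:ℂ)-1) * (1-(y:ℂ)) ^ (1-(s:ℂ)-1)) = ((y ^ (s-1) * (1-y) ^ (-s) : ℝ) : ℂ) := by
    push_cast
    rw [Complex.ofReal_cpow hy0.le, Complex.ofReal_cpow (by linarith : (0:ℝ) ≤ 1 - y)]
    push_cast
    ring_nf
  beta_reduce
  rw [this]
  simp


section
variable {s x : ℝ}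

lemma cov_deriv (hx : 0 < x) {y : ℝ} (hy : y ∈ Set.Ioo (0:ℝ) 1) :
    HasDerivAt (fun y : ℝ => x * (1-y)⁻¹ - x + 1) (x / (1-y)^2) y := by
  have hne : (1:ℝ) - y ≠ 0 := by have := hy.2; intro h; linarith [h]
  have h1 : HasDerivAt (fun y : ℝ => 1 - y) (-1) y := (hasDerivAt_id y).const_sub 1
  have h2 := (h1.inv hne).const_mul x
  have h3 := (h2.sub_const x).add_const 1
  convert h3 using 1
  · rfl
  · rfl
  · rfl
  · ring

lemma cov_inj (hx : 0 < x) :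
    Set.InjOn (fun y : ℝ => x * (1-y)⁻¹ - x + 1) (Set.Ioo (0:ℝ) 1) := by
  have : StrictMonoOn (fun y : ℝ => x * (1-y)⁻¹ - x + 1) (Set.Ioo (0:ℝ) 1) := by
    intro a ha b hb hab
    have h1 : (0:ℝ) < 1 - b := by linarith [hb.2]
    have h2 : (1:ℝ) - b < 1 - a := by linarith
    have : (1-a)⁻¹ < (1-b)⁻¹ := by
      apply inv_strictAnti₀ h1 h2
    simp only
    nlinarith
  exact this.injOn

lemma cov_image (hx : 0 < x) :
    (fun y : ℝ => x * (1-y)⁻¹ - x + 1) '' Set.Ioo (0:ℝ) 1 = Set.Ioi (1:ℝ) := by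
  ext u
  constructor
  · rintro ⟨y, ⟨hy0, hy1⟩, rfl⟩
    have h1 : (0:ℝ) < 1 - y := by linarith
    have : (1:ℝ) < (1-y)⁻¹ := by
      rw [lt_inv_comm₀ one_pos h1] <;> linarith
    simp only [Set.mem_Ioi]
    nlinarith
  · intro hu
    simp only [Set.mem_Ioi] at hu
    have hu1 : (0:ℝ) < u - 1 := by linarith
    have hd : (0:ℝ) < u - 1 + x := by linarith
    refine ⟨(u-1)/(u-1+x), ⟨by positivity, ?_⟩, ?_⟩
    · rw [div_lt_one hd]; linarith
    · have h2 : 1 - (u-1)/(u-1+x) = x / (u-1+x) := by field_simp; ring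
      simp only
      rw [h2]
      field_simp
      ring
end

section
variable {s x : ℝ}

lemma cov_calc (h0 : 0 < s) (h1 : s < 1) (hx : 0 < x) {y : ℝ} (hy : y ∈ Set.Ioo (0:ℝ) 1) :
    |x / (1-y)^2| • ((x * (1-y)⁻¹ - x + 1 - 1) ^ (s-1) / (x * (1-y)⁻¹ - x + 1 - 1 + x))
      = x ^ (s-1) * (y ^ (s-1) * (1-y) ^ (-s)) := by
  obtain ⟨hy0, hy1⟩ := hy
  have hc : (0:ℝ) < 1 - y := by linarith
  have hA : x * (1-y)⁻¹ - x + 1 - 1 = x * y / (1-y) := by field_simp; ring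
  have hB : x * (1-y)⁻¹ - x + 1 - 1 + x = x / (1-y) := by field_simp; ring
  rw [hB, hA, smul_eq_mul, abs_of_pos (by positivity)]
  rw [Real.div_rpow (by positivity) hc.le, Real.mul_rpow hx.le hy0.le]
  rw [Real.rpow_neg hc.le]
  have hxs : (0:ℝ) < x ^ (s-1) := Real.rpow_pos_of_pos hx _
  have hys : (0:ℝ) < y ^ (s-1) := Real.rpow_pos_of_pos hy0 _
  have hcs : (0:ℝ) < (1-y) ^ (s-1) := Real.rpow_pos_of_pos hc _
  have hcs2 : (0:ℝ) < (1-y) ^ s := Real.rpow_pos_of_pos hc _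
  have key : (1-y) ^ (s-1) * (1-y) = (1-y) ^ s := by
    rw [← Real.rpow_add_one hc.ne' (s-1)]; ring_nf
  field_simp
  rw [← key]
  ring
end


section
variable {s x : ℝ}

lemma majorant (h0 : 0 < s) (h1 : s < 1) (hx : 0 < x) :
    IntegrableOn (fun u : ℝ => (u-1) ^ (s-1) / (u-1+x)) (Set.Ioi (1:ℝ)) ∧
    ∫ u in Set.Ioi (1:ℝ), (u-1) ^ (s-1) / (u-1+x)
      = x ^ (s-1) * (π / Real.sin (π * s)) := by
  set f : ℝ → ℝ := fun y => x * (1-y)⁻¹ - x + 1 with hf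
  set g : ℝ → ℝ := fun u => (u-1) ^ (s-1) / (u-1+x) with hg
  have hderiv : ∀ y ∈ Set.Ioo (0:ℝ) 1,
      HasDerivWithinAt f (x / (1-y)^2) (Set.Ioo (0:ℝ) 1) y :=
    fun y hy => (cov_deriv hx hy).hasDerivWithinAt
  have hcalc : ∀ y ∈ Set.Ioo (0:ℝ) 1,
      |x / (1-y)^2| • g (f y) = x ^ (s-1) * (y ^ (s-1) * (1-y) ^ (-s)) :=
    fun y hy => cov_calc h0 h1 hx hy
  have hint : Integrable (fun y : ℝ => |x / (1-y)^2| • g (f y))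
      (volume.restrict (Set.Ioo (0:ℝ) 1)) := by
    refine (((beta_int h0 h1).const_mul (x ^ (s-1)))).congr ?_
    exact (ae_restrict_iff' measurableSet_Ioo).2
      (Filter.Eventually.of_forall fun y hy => (hcalc y hy).symm)
  constructor
  · have := (integrableOn_image_iff_integrableOn_abs_deriv_smul measurableSet_Ioo
      hderiv (cov_inj hx) g).2 hint
    rwa [cov_image hx] at this
  · rw [← cov_image hx,
      integral_image_eq_integral_abs_deriv_smul measurableSet_Ioo hderiv (cov_inj hx) g,
      setIntegral_congr_fun measurableSet_Ioo hcalc, integral_const_mul,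
      beta_rval h0 h1]

end

theorem W_bound (α x : ℝ) (hα : 1 < α) (hx : 0 < x) :
    x ^ (1 - 1/α) * ∫ u in Set.Ioi (1:ℝ), (u - 1) ^ (1/α) / (u * (u + x)) ≤
      π / Real.sin (π / α) := by
  set s : ℝ := 1/α with hs
  have hα0 : 0 < α := by linarith
  have h0 : 0 < s := by positivity
  have h1 : s < 1 := by rw [hs, div_lt_one hα0]; exact hα
  obtain ⟨hInt, hVal⟩ := majorant (x := x) h0 h1 hx
  have hmono : ∫ u in Set.Ioi (1:ℝ), (u - 1) ^ s / (u * (u + x))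
      ≤ ∫ u in Set.Ioi (1:ℝ), (u-1) ^ (s-1) / (u-1+x) := by
    refine integral_mono_of_nonneg ?_ hInt ?_
    · exact (ae_restrict_iff' measurableSet_Ioi).2
        (Filter.Eventually.of_forall fun u hu => by
          have h1u : (1:ℝ) < u := hu
          have : (0:ℝ) < u := by linarith
          have : (0:ℝ) ≤ u - 1 := by linarith
          beta_reduce
          positivity)
    · refine (ae_restrict_iff' measurableSet_Ioi).2
        (Filter.Eventually.of_forall fun u hu => ?_)
      have h1u : (1:ℝ) < u := hu
      have hu1 : (0:ℝ) < u - 1 := by linarith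
      have hrw : (u-1) ^ (s-1) / (u-1+x) = (u-1) ^ s / ((u-1) * (u-1+x)) := by
        rw [Real.rpow_sub hu1, Real.rpow_one]
        field_simp
      beta_reduce
      rw [hrw]
      gcongr <;> nlinarith
  have hfin : x ^ (1-s) * (x ^ (s-1) * (π / Real.sin (π * s)))
      = π / Real.sin (π * s) := by
    rw [← mul_assoc, ← Real.rpow_add hx]
    norm_num
  have hπ : π / α = π * s := by rw [hs]; ring
  calc x ^ (1-s) * ∫ u in Set.Ioi (1:ℝ), (u - 1) ^ s / (u * (u + x))
      ≤ x ^ (1-s) * ∫ u in Set.Ioi (1:ℝ), (u-1) ^ (s-1) / (u-1+x) := by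
        apply mul_le_mul_of_nonneg_left hmono (by positivity)
    _ = π / Real.sin (π / α) := by rw [hVal, hfin, hπ]
end

section
/- Let σ_ν(t) = exp(-ν/(1-t²)) for |t| < 1 (and 0 outside), with ν > 0. For t ∈ [0,1), set ρ = 1-t and z = t + ρe^{iθ} with θ ∈ (-π,π). Then Re(1/(1-z²)) ≥ 1/(4ρ) + 1/4. -/
open Real Complex

private lemma re_aux (X Y : ℝ) :
    ((1 : ℂ) / ((X : ℂ) + (Y : ℂ) * Complex.I)).re = X / (X ^ 2 + Y ^ 2) := by
  simp [Complex.div_re, Complex.normSq_apply]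
  ring_nf

theorem re_one_div_one_sub_sq (t θ : ℝ) (ht : t ∈ Set.Ico (0:ℝ) 1)
    (hθ : θ ∈ Set.Ioo (-π) π) (hθ0 : θ ≠ 0) :
    1 / (4 * (1 - t)) + 1 / 4 ≤
      ((1 / (1 - ((t : ℂ) + (1 - t) * Complex.exp (θ * Complex.I)) ^ 2)).re) := by
  obtain ⟨ht0, ht1⟩ := ht
  obtain ⟨hθ1, hθ2⟩ := hθ
  have hρ0 : (0:ℝ) < 1 - t := by linarith
  set c := Real.cos θ with hc
  set s := Real.sin θ with hs
  have hsc : s ^ 2 + c ^ 2 = 1 := Real.sin_sq_add_cos_sq θ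
  have hc1 : c < 1 := by
    have h1 : c ≤ 1 := Real.cos_le_one θ
    rcases lt_or_eq_of_le h1 with h | h
    · exact h
    · exact absurd ((Real.cos_eq_one_iff_of_lt_of_lt
        (by linarith [Real.pi_pos] : -(2*π) < θ) (by linarith [Real.pi_pos])).mp h) hθ0
  have hc2 : -1 < c := by
    have h1 : Real.cos π < Real.cos |θ| := by
      apply Real.cos_lt_cos_of_nonneg_of_le_pi (abs_nonneg θ) le_rfl
      rw [abs_lt]; exact ⟨hθ1, hθ2⟩
    rw [Real.cos_pi, Real.cos_abs] at h1
    exact h1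
  have hexp : Complex.exp (θ * Complex.I) = (c : ℂ) + (s : ℂ) * Complex.I := by
    rw [Complex.exp_mul_I, Complex.ofReal_cos, Complex.ofReal_sin]
  have h1 : 1 - ((t : ℂ) + (1 - t) * Complex.exp (θ * Complex.I)) ^ 2
      = ((1 - (t + (1 - t) * c) ^ 2 + ((1 - t) * s) ^ 2 : ℝ) : ℂ)
        + ((-2 * (t + (1 - t) * c) * ((1 - t) * s) : ℝ) : ℂ) * Complex.I := by
    rw [hexp]
    push_cast
    linear_combination (-((1 - (t:ℂ)) ^ 2 * (s:ℂ) ^ 2)) * Complex.I_sq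
  rw [h1, re_aux]
  have hapos : 0 < 1 + t + (1 - t) * c := by nlinarith
  have hkeyN : (1 - (t + (1 - t) * c) ^ 2 + ((1 - t) * s) ^ 2) ^ 2
        + (-2 * (t + (1 - t) * c) * ((1 - t) * s)) ^ 2
      = 2 * (1 - t) ^ 2 * (1 - c) * ((1 + t + (1 - t) * c) ^ 2 + (1 - t) ^ 2 * s ^ 2) := by
    linear_combination ((1 - t) ^ 4 * (s ^ 2 + 1 - c ^ 2)
      + 2 * (1 - t) ^ 2 * (1 - (t + (1 - t) * c) ^ 2)
      + 4 * (t + (1 - t) * c) ^ 2 * (1 - t) ^ 2 - 2 * (1 - t) ^ 4 * (1 - c)) * hsc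
  have hN : 0 < (1 - (t + (1 - t) * c) ^ 2 + ((1 - t) * s) ^ 2) ^ 2
      + (-2 * (t + (1 - t) * c) * ((1 - t) * s)) ^ 2 := by
    rw [hkeyN]
    have h2 : 0 < 1 - c := by linarith
    have h3 : 0 < (1 + t + (1 - t) * c) ^ 2 + (1 - t) ^ 2 * s ^ 2 := by positivity
    positivity
  rw [le_div_iff₀ hN]
  have key : 4 * (1 - t) * (1 - (t + (1 - t) * c) ^ 2 + ((1 - t) * s) ^ 2)
      - (1 + (1 - t)) * ((1 - (t + (1 - t) * c) ^ 2 + ((1 - t) * s) ^ 2) ^ 2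
        + (-2 * (t + (1 - t) * c) * ((1 - t) * s)) ^ 2)
      = 4 * (1 - t) ^ 4 * t * (1 - c) ^ 2 := by
    linear_combination (4 * (1 - t) ^ 3
      - (1 + (1 - t)) * (2 * (1 - (t + (1 - t) * c) ^ 2) * (1 - t) ^ 2
        + 4 * (t + (1 - t) * c) ^ 2 * (1 - t) ^ 2)
      - (1 + (1 - t)) * (1 - t) ^ 4 * (s ^ 2 + 1 - c ^ 2)) * hsc
  have h4 : (0:ℝ) ≤ 4 * (1 - t) ^ 4 * t * (1 - c) ^ 2 := by positivity
  have heq : (1 / (4 * (1 - t)) + 1 / 4)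
      * ((1 - (t + (1 - t) * c) ^ 2 + ((1 - t) * s) ^ 2) ^ 2
        + (-2 * (t + (1 - t) * c) * ((1 - t) * s)) ^ 2)
      = ((1 + (1 - t)) * ((1 - (t + (1 - t) * c) ^ 2 + ((1 - t) * s) ^ 2) ^ 2
        + (-2 * (t + (1 - t) * c) * ((1 - t) * s)) ^ 2)) / (4 * (1 - t)) := by
    field_simp
  rw [heq, div_le_iff₀ (by positivity : (0:ℝ) < 4 * (1 - t))]
  linarith [key, h4]
end
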